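/- In the setting of the previous theorem, if additionally ⪰* ∈ P rationalizes the entire choice function c (for every x,y ∈ X, c({x,y}) ⪰* x and c({x,y}) ⪰* y), and for every n the preference ⪰_n ∈ P rationalizes the observed choices on Σ_n, then ⪰_n → ⪰* in the closed convergence topology. -/

import Mathlib

open Filter Topology MeasureTheory

/-- A binary relation on `X`, viewed as a set of pairs, is complete. -/
def CompleteRel {X : Type*} (R : Set (X × X)) : Prop :=
  ∀ x y : X, (x, y) ∈ R ∨ (y, x) ∈ R

/-- The strict part of a relation. -/
def StrictPref {X : Type*} (R : Set (X × X)) (x y : X) : Prop :=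
  (x, y) ∈ R ∧ (y, x) ∉ R

/-- A relation is locally strict. -/
def LocallyStrict {X : Type*} [TopologicalSpace X] (R : Set (X × X)) : Prop :=
  ∀ x y : X, (x, y) ∈ R → ∀ V ∈ 𝓝 ((x, y) : X × X), ∃ p ∈ V, StrictPref R p.1 p.2

/-- Convergence of a sequence of relations in the closed convergence topology. -/
def ClosedConv {X : Type*} [TopologicalSpace X] (R : ℕ → Set (X × X)) (S : Set (X × X)) : Prop :=
  (∀ p ∈ S, ∃ u : ℕ → X × X, Tendsto u atTop (𝓝 p) ∧ ∀ n, u n ∈ R n) ∧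
  (∀ φ : ℕ → ℕ, StrictMono φ → ∀ u : ℕ → X × X, (∀ k, u k ∈ R (φ k)) →
    ∀ p : X × X, Tendsto u atTop (𝓝 p) → p ∈ S)

/-- Grodal transitivity: `x ⪰ y ≻ z ⪰ w` implies `x ⪰ w`. -/
def GrodalTrans {X : Type*} (R : Set (X × X)) : Prop :=
  ∀ x y z w : X, (x, y) ∈ R → StrictPref R y z → (z, w) ∈ R → (x, w) ∈ R

/-- Strict monotonicity with respect to a dominance relation `D`. -/
def StrictMonoWrt {X : Type*} (R : Set (X × X)) (D : Set (X × X)) : Prop :=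
  ∀ x y : X, (x, y) ∈ D → StrictPref R x y

/-- The relation `R` rationalizes the observed choices on the experiment consisting of
the first `n` binary choice problems `B 0, …, B (n-1)`. -/
def RationalizesOn {X : Type*} (R : Set (X × X)) (c : Sym2 X → X) (B : ℕ → Sym2 X)
    (n : ℕ) : Prop :=
  ∀ k < n, ∀ x ∈ B k, (c (B k), x) ∈ R

/-- The nested sequence of experiments determined by `B` is exhaustive. -/
def Exhaustive {X : Type*} [TopologicalSpace X] (B : ℕ → Sym2 X) : Prop :=
  Dense {x : X | ∃ k, x ∈ B k} ∧
  ∀ x y : X, x ≠ y → (∃ k, x ∈ B k) → (∃ k, y ∈ B k) → ∃ k, B k = Sym2.mk x y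

section Aux

open TopologicalSpace

/-- Diagonal selection: if `C n` eventually meets every neighborhood of `p`,
a sequence `u n ∈ C n` converging to `p` can be selected. -/
lemma seq_sel {Y : Type*} [TopologicalSpace Y] [FirstCountableTopology Y]
    (C : ℕ → Set Y) (hne : ∀ n, (C n).Nonempty) (p : Y)
    (h : ∀ O ∈ 𝓝 p, ∃ N, ∀ n ≥ N, (C n ∩ O).Nonempty) :
    ∃ u : ℕ → Y, Tendsto u atTop (𝓝 p) ∧ ∀ n, u n ∈ C n := by
  obtain ⟨W, hW⟩ := (𝓝 p).exists_antitone_basis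
  choose N hN using fun j => h (W j) (hW.mem j)
  obtain ⟨M, hMmono, hMN⟩ : ∃ M : ℕ → ℕ, StrictMono M ∧ ∀ j, N j ≤ M j := by
    refine ⟨fun j => Nat.rec (N 0) (fun j m => max (m + 1) (N (j + 1))) j, ?_, ?_⟩
    · exact strictMono_nat_of_lt_succ (fun j =>
        lt_of_lt_of_le (Nat.lt_succ_self _) (le_max_left _ _))
    · intro j; cases j with
      | zero => exact le_refl _
      | succ j => exact le_max_right _ _
  set k : ℕ → ℕ := fun n => Nat.findGreatest (fun j => M j ≤ n) n with hk
  have hk1 : ∀ n, M 0 ≤ n → M (k n) ≤ n := fun n hn =>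
    Nat.findGreatest_spec (P := fun j => M j ≤ n) (Nat.zero_le n) hn
  have hk2 : ∀ j n, M j ≤ n → j ≤ n → j ≤ k n := fun j n h1 h2 =>
    Nat.le_findGreatest h2 h1
  have hsel : ∀ n, M 0 ≤ n → (C n ∩ W (k n)).Nonempty := by
    intro n hn
    exact hN (k n) n (le_trans (hMN _) (hk1 n hn))
  have hu : ∃ u : ℕ → Y, ∀ n, u n ∈ C n ∧ (M 0 ≤ n → u n ∈ W (k n)) := by
    refine ⟨fun n => if hn : M 0 ≤ n then (hsel n hn).choose else (hne n).choose, fun n => ?_⟩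
    by_cases hn : M 0 ≤ n
    · simp only [dif_pos hn]; exact ⟨(hsel n hn).choose_spec.1, fun _ => (hsel n hn).choose_spec.2⟩
    · simp only [dif_neg hn]; exact ⟨(hne n).choose_spec, fun h' => absurd h' hn⟩
  obtain ⟨u, hu⟩ := hu
  refine ⟨u, ?_, fun n => (hu n).1⟩
  rw [hW.toHasBasis.tendsto_right_iff]
  intro j _
  rw [eventually_atTop]
  refine ⟨max (max (M j) j) (M 0), fun n hn => ?_⟩
  have h1 : M 0 ≤ n := le_trans (le_max_right _ _) hn
  have h2 : j ≤ k n := hk2 j n (le_trans (le_max_left _ _) (le_trans (le_max_left _ _) hn))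
    (le_trans (le_max_right _ _) (le_trans (le_max_left _ _) hn))
  exact hW.antitone h2 ((hu n).2 h1)

/-- Diagonal subsequence extraction: any sequence of sets has a subsequence
admitting a Kuratowski-type limit set `S`. -/
lemma diag_sub {Y : Type*} [TopologicalSpace Y] [SecondCountableTopology Y]
    (C : ℕ → Set Y) :
    ∃ ψ : ℕ → ℕ, StrictMono ψ ∧ ∃ S : Set Y, IsClosed S ∧
      (∀ q ∈ S, ∀ O ∈ 𝓝 q, ∃ N, ∀ k ≥ N, (C (ψ k) ∩ O).Nonempty) ∧
      (∀ q : Y, (∀ O ∈ 𝓝 q, {k | (C (ψ k) ∩ O).Nonempty}.Infinite) → q ∈ S) := by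
  classical
  obtain ⟨b, hbc, -, hb⟩ := TopologicalSpace.exists_countable_basis Y
  obtain ⟨e, he⟩ : ∃ e : ℕ → Set Y, ∀ O ∈ b, ∃ i, e i = O := by
    rcases b.eq_empty_or_nonempty with h | h
    · exact ⟨fun _ => ∅, fun O hO => by simp [h] at hO⟩
    · obtain ⟨f, hf⟩ := hbc.exists_eq_range h
      exact ⟨f, fun O hO => by rw [hf] at hO; obtain ⟨i, hi⟩ := hO; exact ⟨i, hi⟩⟩
  set P : ℕ → ℕ → Prop := fun i n => (C n ∩ e i).Nonempty with hP
  obtain ⟨A, hA0, hAsub, hAdich, hAinfs⟩ :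
      ∃ A : ℕ → Set ℕ, A 0 = Set.univ ∧ (∀ i, A (i + 1) ⊆ A i) ∧
        (∀ i, (∀ n ∈ A (i + 1), P i n) ∨ (∀ n ∈ A (i + 1), ¬ P i n)) ∧
        (∀ i, (A i).Infinite → (A (i + 1)).Infinite) := by
    refine ⟨fun i => Nat.rec Set.univ
      (fun i s => if ({n ∈ s | P i n}).Infinite then {n ∈ s | P i n}
        else {n ∈ s | ¬ P i n}) i, rfl, ?_, ?_, ?_⟩
    · intro i
      by_cases h : ({n ∈ (Nat.rec Set.univ (fun i s => if ({n ∈ s | P i n}).Infinite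
          then {n ∈ s | P i n} else {n ∈ s | ¬ P i n}) i : Set ℕ) | P i n}).Infinite
      · simp only [if_pos h]; exact Set.sep_subset _ _
      · simp only [if_neg h]; exact Set.sep_subset _ _
    · intro i
      by_cases h : ({n ∈ (Nat.rec Set.univ (fun i s => if ({n ∈ s | P i n}).Infinite
          then {n ∈ s | P i n} else {n ∈ s | ¬ P i n}) i : Set ℕ) | P i n}).Infinite
      · simp only [if_pos h]; exact Or.inl (fun n hn => hn.2)
      · simp only [if_neg h]; exact Or.inr (fun n hn => hn.2)
    · intro i hinf
      by_cases h : ({n ∈ (Nat.rec Set.univ (fun i s => if ({n ∈ s | P i n}).Infinite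
          then {n ∈ s | P i n} else {n ∈ s | ¬ P i n}) i : Set ℕ) | P i n}).Infinite
      · simp only [if_pos h]; exact h
      · simp only [if_neg h]
        have hu : ({n ∈ (Nat.rec Set.univ (fun i s => if ({n ∈ s | P i n}).Infinite
            then {n ∈ s | P i n} else {n ∈ s | ¬ P i n}) i : Set ℕ) | P i n} ∪
            {n ∈ (Nat.rec Set.univ (fun i s => if ({n ∈ s | P i n}).Infinite
            then {n ∈ s | P i n} else {n ∈ s | ¬ P i n}) i : Set ℕ) | ¬ P i n}).Infinite := by
          refine hinf.mono (fun n hn => ?_)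
          by_cases hp : P i n
          · exact Or.inl ⟨hn, hp⟩
          · exact Or.inr ⟨hn, hp⟩
        rcases Set.infinite_union.mp hu with h' | h'
        · exact absurd h' h
        · exact h'
  have hAinf : ∀ i, (A i).Infinite := by
    intro i
    induction i with
    | zero => rw [hA0]; exact Set.infinite_univ
    | succ i ih => exact hAinfs i ih
  have hAanti : ∀ i j, i ≤ j → A j ⊆ A i :=
    fun i j h => antitone_nat_of_succ_le (fun n => hAsub n) h
  obtain ⟨ψ, hψmono, hψmem⟩ : ∃ ψ : ℕ → ℕ, StrictMono ψ ∧ ∀ k, ψ k ∈ A k := by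
    have h0 := (hAinf 0).nonempty
    have hgt : ∀ k (m : ℕ), ∃ b ∈ A (k + 1), m < b := fun k m => (hAinf (k + 1)).exists_gt m
    refine ⟨fun k => Nat.rec h0.choose (fun k prev => (hgt k prev).choose) k, ?_, ?_⟩
    · exact strictMono_nat_of_lt_succ (fun k => (hgt k _).choose_spec.2)
    · intro k
      induction k with
      | zero => exact h0.choose_spec
      | succ k ih => exact (hgt k _).choose_spec.1
  refine ⟨ψ, hψmono, {q | ∀ O ∈ 𝓝 q, {k | (C (ψ k) ∩ O).Nonempty}.Infinite}, ?_, ?_, ?_⟩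
  · rw [← closure_subset_iff_isClosed]
    intro q hq O hO
    obtain ⟨O', hO'sub, hO'open, hqO'⟩ := mem_nhds_iff.mp hO
    obtain ⟨s, hsO', hsS⟩ := mem_closure_iff.mp hq O' hO'open hqO'
    exact (hsS O' (hO'open.mem_nhds hsO')).mono
      (fun k hk => hk.mono (Set.inter_subset_inter_right _ hO'sub))
  · intro q hq O hO
    obtain ⟨t, htb, hqt, htO⟩ := hb.mem_nhds_iff.mp hO
    obtain ⟨i, hi⟩ := he t htb
    have hiopen : IsOpen (e i) := by rw [hi]; exact hb.isOpen htb
    have hqei : q ∈ e i := by rw [hi]; exact hqt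
    have hisub : e i ⊆ O := by rw [hi]; exact htO
    have hinf : {k | (C (ψ k) ∩ e i).Nonempty}.Infinite := hq (e i) (hiopen.mem_nhds hqei)
    obtain ⟨k0, hk0mem, hk0gt⟩ := hinf.exists_gt i
    have hpos : ∀ n ∈ A (i + 1), P i n := by
      rcases hAdich i with h | h
      · exact h
      · exact absurd hk0mem (h (ψ k0) (hAanti (i + 1) k0 hk0gt (hψmem k0)))
    refine ⟨i + 1, fun k hk => ?_⟩
    have : P i (ψ k) := hpos (ψ k) (hAanti (i + 1) k hk (hψmem k))
    exact this.mono (Set.inter_subset_inter_right _ hisub)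
  · intro q hq
    exact hq

end Aux

theorem stmt4 {X : Type*} [TopologicalSpace X] [PolishSpace X] [LocallyCompactSpace X]
    (P : Set (Set (X × X)))
    (hP : ∀ R ∈ P, CompleteRel R ∧ IsClosed R ∧ LocallyStrict R)
    (hPclosed : ∀ (R : ℕ → Set (X × X)), (∀ n, R n ∈ P) →
      ∀ S : Set (X × X), IsClosed S → ClosedConv R S → S ∈ P)
    (B : ℕ → Sym2 X) (hBinj : Function.Injective B) (hBex : Exhaustive B)
    (c : Sym2 X → X) (hc : ∀ z : Sym2 X, c z ∈ z)
    (Sstar : Set (X × X)) (hSstar : Sstar ∈ P)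
    (hrat : ∀ x y : X, (c (Sym2.mk x y), x) ∈ Sstar ∧ (c (Sym2.mk x y), y) ∈ Sstar)
    (R : ℕ → Set (X × X))
    (hR : ∀ n, R n ∈ P ∧ RationalizesOn (R n) c B n) :
    ClosedConv R Sstar := by
  classical
  have hrefl : ∀ Q ∈ P, ∀ z : X, (z, z) ∈ Q := fun Q hQ z => ((hP Q hQ).1 z z).elim id id
  have hSclosed : IsClosed Sstar := (hP Sstar hSstar).2.1
  -- key: in an open rectangle disjoint from Sstar, there is a data pair whose
  -- chosen element is the second coordinate, hence it is reversed in all later `R n`.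
  have key : ∀ U V : Set X, IsOpen U → IsOpen V → Disjoint U V → U.Nonempty → V.Nonempty →
      (U ×ˢ V) ∩ Sstar = ∅ →
      ∃ x' y' m, x' ∈ U ∧ y' ∈ V ∧ ∀ n, m < n → (y', x') ∈ R n := by
    intro U V hUo hVo hdisj hUne hVne hUV
    obtain ⟨x', hx'D, hx'U⟩ := hBex.1.exists_mem_open hUo hUne
    obtain ⟨y', hy'D, hy'V⟩ := hBex.1.exists_mem_open hVo hVne
    have hne : x' ≠ y' := fun h => Set.disjoint_left.mp hdisj hx'U (h ▸ hy'V)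
    obtain ⟨m, hm⟩ := hBex.2 x' y' hne hx'D hy'D
    have hcmem : c (B m) ∈ B m := hc (B m)
    rw [hm] at hcmem
    have hcval : c (Sym2.mk x' y') = y' := by
      rcases Sym2.mem_iff.mp hcmem with h | h
      · exfalso
        have h2 := (hrat x' y').2
        rw [h] at h2
        have : (x', y') ∈ (U ×ˢ V) ∩ Sstar := ⟨⟨hx'U, hy'V⟩, h2⟩
        rw [hUV] at this
        exact this
      · exact h
    refine ⟨x', y', m, hx'U, hy'V, fun n hn => ?_⟩
    have h3 := (hR n).2 m hn x' (by rw [hm]; exact Sym2.mem_mk_left x' y')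
    rwa [hm, hcval] at h3
  constructor
  · -- lower part
    rintro ⟨x, y⟩ hp
    refine seq_sel R (fun n => ⟨(x, x), hrefl _ (hR n).1 x⟩) (x, y) ?_
    intro O hO
    obtain ⟨O', hO'sub, hO'open, hpO'⟩ := mem_nhds_iff.mp hO
    obtain ⟨⟨a, b⟩, hqO', hqst⟩ :=
      (hP Sstar hSstar).2.2 x y hp O' (hO'open.mem_nhds hpO')
    have hba : ((b, a) : X × X) ∉ Sstar := hqst.2
    have hab : a ≠ b := fun h => hba (h ▸ hrefl Sstar hSstar a)
    obtain ⟨U1, V1, hU1, hV1, haU1, hbV1, hrect1⟩ :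
        ∃ U1 V1 : Set X, IsOpen U1 ∧ IsOpen V1 ∧ a ∈ U1 ∧ b ∈ V1 ∧ U1 ×ˢ V1 ⊆ O' := by
      obtain ⟨u, v, hu, hau, hv, hbv, huv⟩ := mem_nhds_prod_iff'.mp (hO'open.mem_nhds hqO')
      exact ⟨u, v, hu, hv, hau, hbv, huv⟩
    obtain ⟨V2, U2, hV2, hU2, hbV2, haU2, hrect2⟩ :
        ∃ V2 U2 : Set X, IsOpen V2 ∧ IsOpen U2 ∧ b ∈ V2 ∧ a ∈ U2 ∧ V2 ×ˢ U2 ⊆ Sstarᶜ := by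
      obtain ⟨u, v, hu, hau, hv, hbv, huv⟩ :=
        mem_nhds_prod_iff'.mp (hSclosed.isOpen_compl.mem_nhds (show ((b, a) : X × X) ∈ Sstarᶜ from hba))
      exact ⟨u, v, hu, hv, hau, hbv, huv⟩
    obtain ⟨U3, V3, hU3, hV3, haU3, hbV3, hd3⟩ := t2_separation hab
    set U : Set X := U1 ∩ (U2 ∩ U3)
    set V : Set X := V1 ∩ (V2 ∩ V3)
    have hUo : IsOpen U := hU1.inter (hU2.inter hU3)
    have hVo : IsOpen V := hV1.inter (hV2.inter hV3)
    have haU : a ∈ U := ⟨haU1, haU2, haU3⟩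
    have hbV : b ∈ V := ⟨hbV1, hbV2, hbV3⟩
    have hdisj : Disjoint V U := (hd3.mono (fun z hz => hz.2.2) (fun z hz => hz.2.2)).symm
    have hVU : (V ×ˢ U) ∩ Sstar = ∅ := by
      apply Set.eq_empty_iff_forall_notMem.mpr
      rintro ⟨z1, z2⟩ ⟨⟨hz1, hz2⟩, hz⟩
      exact hrect2 ⟨hz1.2.1, hz2.2.1⟩ hz
    obtain ⟨y'', x'', m, hy''V, hx''U, hRn⟩ :=
      key V U hVo hUo hdisj ⟨b, hbV⟩ ⟨a, haU⟩ hVU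
    refine ⟨m + 1, fun n hn => ⟨(x'', y''), hRn n (Nat.lt_of_lt_of_le (Nat.lt_succ_self m) hn),
      hO'sub (hrect1 ⟨hx''U.1, hy''V.1⟩)⟩⟩
  · -- upper part
    intro φ hφ u hu p hp
    by_contra hps
    obtain ⟨x, y⟩ := p
    have hxy : x ≠ y := fun h => hps (h ▸ hrefl Sstar hSstar x)
    obtain ⟨U1, V1, hU1, hV1, hxU1, hyV1, hrect1⟩ :
        ∃ U1 V1 : Set X, IsOpen U1 ∧ IsOpen V1 ∧ x ∈ U1 ∧ y ∈ V1 ∧ U1 ×ˢ V1 ⊆ Sstarᶜ := by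
      obtain ⟨u', v', hu', hxu, hv', hyv, huv⟩ :=
        mem_nhds_prod_iff'.mp (hSclosed.isOpen_compl.mem_nhds (show ((x, y) : X × X) ∈ Sstarᶜ from hps))
      exact ⟨u', v', hu', hv', hxu, hyv, huv⟩
    obtain ⟨U3, V3, hU3, hV3, hxU3, hyV3, hd3⟩ := t2_separation hxy
    set U : Set X := U1 ∩ U3
    set V : Set X := V1 ∩ V3
    have hUo : IsOpen U := hU1.inter hU3
    have hVo : IsOpen V := hV1.inter hV3
    have hxU : x ∈ U := ⟨hxU1, hxU3⟩
    have hyV : y ∈ V := ⟨hyV1, hyV3⟩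
    have hdisj : Disjoint U V := hd3.mono (fun z hz => hz.2) (fun z hz => hz.2)
    have hUV : (U ×ˢ V) ∩ Sstar = ∅ := by
      apply Set.eq_empty_iff_forall_notMem.mpr
      rintro ⟨z1, z2⟩ ⟨⟨hz1, hz2⟩, hz⟩
      exact hrect1 ⟨hz1.1, hz2.1⟩ hz
    obtain ⟨ψ, hψ, S, hScl, hSa, hSb⟩ := diag_sub (fun k => R (φ k))
    have hφψ : ∀ k, k ≤ φ (ψ k) := fun k => le_trans (hψ.le_apply) (hφ.le_apply)
    have hCC : ClosedConv (fun k => R (φ (ψ k))) S := by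
      constructor
      · intro q hq
        exact seq_sel (fun k => R (φ (ψ k)))
          (fun k => ⟨(x, x), hrefl _ (hR _).1 x⟩) q (hSa q hq)
      · intro σ hσ v hv q hq
        apply hSb
        intro O hO
        obtain ⟨K, hK⟩ := eventually_atTop.mp (hq hO)
        have him : (σ '' Set.Ici K).Infinite :=
          (Set.Ici_infinite K).image (hσ.injective.injOn)
        refine him.mono ?_
        rintro k ⟨j, hj, rfl⟩
        exact ⟨v j, hv j, hK j hj⟩
    have hSP : S ∈ P := hPclosed _ (fun k => (hR _).1) S hScl hCC
    have hpS : ((x, y) : X × X) ∈ S := by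
      apply hSb
      intro O hO
      obtain ⟨K, hK⟩ := eventually_atTop.mp (hp hO)
      refine (Set.Ici_infinite K).mono ?_
      intro k hk
      exact ⟨u (ψ k), hu (ψ k), hK (ψ k) (le_trans hk (hψ.le_apply))⟩
    have hVUS : ∀ bb ∈ V, ∀ aa ∈ U, ((bb, aa) : X × X) ∈ S := by
      intro bb hbb aa haa
      have : ((bb, aa) : X × X) ∈ closure S := by
        rw [mem_closure_iff]
        intro o ho hbao
        obtain ⟨N1, N2, hN1, hN2, hbN1, haN2, hrecto⟩ :
            ∃ N1 N2 : Set X, IsOpen N1 ∧ IsOpen N2 ∧ bb ∈ N1 ∧ aa ∈ N2 ∧ N1 ×ˢ N2 ⊆ o := by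
          obtain ⟨u', v', hu', h1, hv', h2, huv⟩ :=
            mem_nhds_prod_iff'.mp (ho.mem_nhds hbao)
          exact ⟨u', v', hu', hv', h1, h2, huv⟩
        have hUV' : ((U ∩ N2) ×ˢ (V ∩ N1)) ∩ Sstar = ∅ := by
          apply Set.eq_empty_iff_forall_notMem.mpr
          rintro ⟨z1, z2⟩ ⟨⟨hz1, hz2⟩, hz⟩
          have : ((z1, z2) : X × X) ∈ (U ×ˢ V) ∩ Sstar := ⟨⟨hz1.1, hz2.1⟩, hz⟩
          rw [hUV] at this
          exact this
        obtain ⟨x', y', m, hx', hy', hRn⟩ :=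
          key (U ∩ N2) (V ∩ N1) (hUo.inter hN2) (hVo.inter hN1)
            (hdisj.mono (fun z hz => hz.1) (fun z hz => hz.1))
            ⟨aa, haa, haN2⟩ ⟨bb, hbb, hbN1⟩ hUV'
        refine ⟨(y', x'), hrecto ⟨hy'.2, hx'.2⟩, ?_⟩
        apply hSb
        intro O hO
        refine (Set.Ici_infinite (m + 1)).mono ?_
        intro k hk
        have hmem : ((y', x') : X × X) ∈ R (φ (ψ k)) :=
          hRn (φ (ψ k)) (lt_of_lt_of_le (Nat.lt_of_succ_le hk) (hφψ k))
        exact ⟨(y', x'), hmem, mem_of_mem_nhds hO⟩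
      rwa [hScl.closure_eq] at this
    obtain ⟨⟨a2, b2⟩, hab2, hst⟩ :=
      (hP S hSP).2.2 x y hpS (U ×ˢ V) ((hUo.prod hVo).mem_nhds ⟨hxU, hyV⟩)
    exact hst.2 (hVUS b2 hab2.2 a2 hab2.1)
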